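/- Let (X,d) be a pseudo-distance space, let f : X → ℝ be uniformly continuous on (X,d), let ε > 0, and let δ > 0 be such that |f(x) − f(y)| < ε for all x,y ∈ X with d(x,y) < δ. If A ⊆ X is nonempty with SUP_f(A) ∈ ℝ and A' ⊆ X is nonempty with D_H(A,A') < δ, then SUP_f(A') ∈ ℝ and moreover SUP_f(A') ≤ SUP_f(A) + ε. -/

import Mathlib

/-- The distance from a point to a set, induced by an arbitrary
pseudo-distance `d : X → X → EReal`. -/
noncomputable def distSet {X : Type*} (d : X → X → EReal) (x : X) (A : Set X) : EReal :=
  ⨅ a ∈ A, d x a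

/-- The asymmetric Hausdorff distance induced by `d`. -/
noncomputable def DasyH {X : Type*} (d : X → X → EReal) (A A' : Set X) : EReal :=
  ⨆ a ∈ A, distSet d a A'

/-- The (symmetric) Hausdorff distance induced by `d`. -/
noncomputable def DH {X : Type*} (d : X → X → EReal) (A A' : Set X) : EReal :=
  max (DasyH d A A') (DasyH d A' A)

/-- The supremum operator `SUP_f`. -/
noncomputable def SUPf {X : Type*} (f : X → ℝ) (A : Set X) : EReal :=
  ⨆ a ∈ A, (f a : EReal)

/-- If `f` is uniformly continuous on the pseudo-distance space `(X, d)`, `ε > 0` and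
`δ > 0` is such that `|f x − f y| < ε` whenever `d x y < δ`, and if `A` is nonempty with
`SUP_f(A) ∈ ℝ` while `A'` is nonempty with `D_H(A, A') < δ`, then `SUP_f(A') ∈ ℝ` and
`SUP_f(A') ≤ SUP_f(A) + ε`. -/
theorem supf_dom_stable {X : Type*} [Nonempty X] (d : X → X → EReal) (f : X → ℝ)
    (hf : ∀ ε : ℝ, 0 < ε → ∃ δ : ℝ, 0 < δ ∧
      ∀ x y : X, d x y < (δ : EReal) → |f x - f y| < ε)
    (ε δ : ℝ) (hε : 0 < ε) (hδ : 0 < δ)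
    (h : ∀ x y : X, d x y < (δ : EReal) → |f x - f y| < ε)
    (A A' : Set X) (hA : A.Nonempty) (hA' : A'.Nonempty)
    (r : ℝ) (hr : SUPf f A = (r : EReal)) (hd : DH d A A' < (δ : EReal)) :
    ∃ r' : ℝ, SUPf f A' = (r' : EReal) ∧ r' ≤ r + ε := by
  -- Key: every `a' ∈ A'` satisfies `f a' ≤ r + ε`.
  have key : ∀ a' ∈ A', (f a' : EReal) ≤ ((r + ε : ℝ) : EReal) := by
    intro a' ha'
    have h1 : distSet d a' A < (δ : EReal) := by
      refine lt_of_le_of_lt ?_ hd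
      refine le_trans ?_ (le_max_right _ _)
      exact le_iSup₂ (f := fun a _ => distSet d a A) a' ha'
    obtain ⟨a, ha, hda⟩ : ∃ a ∈ A, d a' a < (δ : EReal) := by
      simp only [distSet, iInf_lt_iff] at h1
      obtain ⟨a, ha⟩ := h1
      obtain ⟨ha1, ha2⟩ := ha
      exact ⟨a, ha1, ha2⟩
    have hfa : f a ≤ r := by
      have := le_iSup₂ (f := fun a _ => ((f a : EReal))) a ha
      rw [show (⨆ a ∈ A, ((f a : EReal))) = SUPf f A from rfl, hr] at this
      exact_mod_cast this
    have := h a' a hda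
    have : f a' ≤ f a + ε := by
      have := abs_lt.1 this
      linarith [this.2]
    exact_mod_cast le_trans (by exact_mod_cast this) (by exact_mod_cast add_le_add_left hfa ε)
  have hub : SUPf f A' ≤ ((r + ε : ℝ) : EReal) := iSup₂_le key
  obtain ⟨a0, ha0⟩ := hA'
  have hlb : ((f a0 : ℝ) : EReal) ≤ SUPf f A' :=
    le_iSup₂ (f := fun a _ => ((f a : EReal))) a0 ha0
  have hne_top : SUPf f A' ≠ ⊤ := ne_top_of_le_ne_top (by simp [← EReal.coe_add]) hub
  have hne_bot : SUPf f A' ≠ ⊥ := by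
    intro hb
    rw [hb] at hlb
    exact absurd hlb (by simp)
  refine ⟨(SUPf f A').toReal, ?_, ?_⟩
  · exact (EReal.coe_toReal hne_top hne_bot).symm
  · have := EReal.toReal_le_toReal hub hne_bot (by simp [← EReal.coe_add])
    rwa [EReal.toReal_coe] at this
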